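/- Let α = (a₁ b₃ b₂ b₁) and β = (c₁ c₂ b₃ b₂ b₁) be cyclic permutations on the six distinct symbols a₁, b₁, b₂, b₃, c₁, c₂. Then the group generated by α and β contains no 3-cycle. -/
import Mathlib

open Equiv Equiv.Perm
open scoped Pointwise

/-- The invariant "total": a set of five synthemes (perfect matchings) of the six
points, stabilized by the group generated by the two given cycles but by no 3-cycle. -/
def t0aux_T : Finset (Finset (Finset (Fin 6))) :=
  { {{0,1},{2,4},{3,5}}, {{0,2},{1,3},{4,5}}, {{0,3},{1,4},{2,5}},
    {{0,4},{1,5},{2,3}}, {{0,5},{1,2},{3,4}} }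

def t0aux_a : Perm (Fin 6) := List.formPerm [0,3,2,1]
def t0aux_b : Perm (Fin 6) := List.formPerm [4,5,3,2,1]

lemma t0aux_ha : t0aux_a • t0aux_T = t0aux_T := by decide

lemma t0aux_hb : t0aux_b • t0aux_T = t0aux_T := by decide

set_option maxHeartbeats 1000000 in
lemma t0aux_no3 : ∀ x y z : Fin 6, ([x,y,z] : List (Fin 6)).Nodup →
    List.formPerm [x,y,z] • t0aux_T ≠ t0aux_T := by decide

/-- `Equiv.Perm.viaFintypeEmbedding` of a swap is a swap. -/
lemma t0aux_viaFintypeEmbedding_swap {α β : Type*} [Fintype α] [DecidableEq α] [DecidableEq β]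
    (f : α ↪ β) (x y : α) :
    (Equiv.swap x y).viaFintypeEmbedding f = Equiv.swap (f x) (f y) := by
  ext z
  by_cases hz : z ∈ Set.range f
  · obtain ⟨w, rfl⟩ := hz
    rw [Equiv.Perm.viaFintypeEmbedding_apply_image, f.injective.swap_apply]
  · rw [Equiv.Perm.viaFintypeEmbedding_apply_notMem_range _ _ hz,
      Equiv.swap_apply_of_ne_of_ne (fun h => hz ⟨x, h.symm⟩) (fun h => hz ⟨y, h.symm⟩)]

/-- `formPerm` commutes with mapping a list through an embedding. -/
lemma t0aux_formPerm_map {α β : Type*} [Fintype α] [DecidableEq α] [DecidableEq β]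
    (f : α ↪ β) : ∀ l : List α,
    (l.map f).formPerm = (l.formPerm).viaFintypeEmbedding f
  | [] => by
      simp only [List.map_nil, List.formPerm_nil]
      ext z
      by_cases hz : z ∈ Set.range f
      · obtain ⟨w, rfl⟩ := hz
        rw [Equiv.Perm.viaFintypeEmbedding_apply_image]; rfl
      · rw [Equiv.Perm.viaFintypeEmbedding_apply_notMem_range _ _ hz]; rfl
  | [x] => by
      simp only [List.map_cons, List.map_nil, List.formPerm_singleton]
      ext z
      by_cases hz : z ∈ Set.range f
      · obtain ⟨w, rfl⟩ := hz
        rw [Equiv.Perm.viaFintypeEmbedding_apply_image]; rfl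
      · rw [Equiv.Perm.viaFintypeEmbedding_apply_notMem_range _ _ hz]; rfl
  | x :: y :: t => by
      have ih := t0aux_formPerm_map f (y :: t)
      simp only [List.map_cons, List.formPerm_cons_cons] at *
      rw [ih, ← t0aux_viaFintypeEmbedding_swap f x y]
      simp only [Equiv.Perm.viaFintypeEmbedding, Equiv.Perm.extendDomain_mul]

/-- Every 3-cycle is `formPerm` of a list of three distinct elements. -/
lemma t0aux_threeCycle_formPerm {α : Type*} [Fintype α] [DecidableEq α] {σ : Perm α}
    (h : σ.IsThreeCycle) :
    ∃ x y z : α, ([x,y,z] : List α).Nodup ∧ σ = List.formPerm [x,y,z] := by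
  have hcard : σ.support.card = 3 := h.card_support
  obtain ⟨x, y, z, hxy, hxz, hyz, hs⟩ := Finset.card_eq_three.mp hcard
  have key : ∀ u v w : α, u ≠ v → u ≠ w → v ≠ w → σ.support = {u, v, w} →
      σ u = v → σ = List.formPerm [u, v, w] := by
    intro u v w huv huw hvw hsup hu
    have hmem : ∀ q, σ q ≠ q ↔ q = u ∨ q = v ∨ q = w := by
      intro q
      rw [← Equiv.Perm.mem_support, hsup]; simp
    have hw : σ w = u := by
      have hwne : σ w ≠ w := (hmem w).mpr (Or.inr (Or.inr rfl))
      rcases (hmem (σ w)).mp (fun hfix => hwne (σ.injective hfix)) with h1 | h1 | h1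
      · exact h1
      · exact absurd (σ.injective (h1.trans hu.symm)) (Ne.symm huw)
      · exact absurd h1 hwne
    have hv : σ v = w := by
      have hvne : σ v ≠ v := (hmem v).mpr (Or.inr (Or.inl rfl))
      rcases (hmem (σ v)).mp (fun hfix => hvne (σ.injective hfix)) with h1 | h1 | h1
      · exact absurd (σ.injective (h1.trans hw.symm)) hvw
      · exact absurd h1 hvne
      · exact h1
    have hform : List.formPerm [u, v, w] = Equiv.swap u v * Equiv.swap v w := by
      rw [List.formPerm_cons_cons, List.formPerm_pair]
    ext q
    by_cases hq : q = u ∨ q = v ∨ q = w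
    · rcases hq with rfl | rfl | rfl
      · rw [hu, hform, Equiv.Perm.mul_apply, Equiv.swap_apply_of_ne_of_ne huv huw,
          Equiv.swap_apply_left]
      · rw [hv, hform, Equiv.Perm.mul_apply, Equiv.swap_apply_left,
          Equiv.swap_apply_of_ne_of_ne (Ne.symm huw) (Ne.symm hvw)]
      · rw [hw, hform, Equiv.Perm.mul_apply, Equiv.swap_apply_right, Equiv.swap_apply_right]
    · push_neg at hq
      obtain ⟨h1, h2, h3⟩ := hq
      have hfix : σ q = q := by
        by_contra hne
        rcases (hmem q).mp hne with rfl | rfl | rfl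
        · exact h1 rfl
        · exact h2 rfl
        · exact h3 rfl
      rw [hfix, List.formPerm_apply_of_notMem (by simp [h1, h2, h3])]
  have hxne : σ x ≠ x := by rw [← Equiv.Perm.mem_support, hs]; simp
  have hxmem : σ x ∈ ({x, y, z} : Finset α) := by
    rw [← hs]; exact Equiv.Perm.apply_mem_support.mpr (by rw [hs]; simp)
  simp only [Finset.mem_insert, Finset.mem_singleton] at hxmem
  rcases hxmem with h1 | h1 | h1
  · exact absurd h1 hxne
  · exact ⟨x, y, z, by simp [hxy, hxz, hyz], key x y z hxy hxz hyz hs h1⟩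
  · refine ⟨x, z, y, by simp [hxz, hxy, hyz.symm], key x z y hxz hxy (Ne.symm hyz) ?_ h1⟩
    rw [hs]; ext q; simp only [Finset.mem_insert, Finset.mem_singleton]; tauto

/-- T₀-pair of type (1,3,2): the group generated by α = (a₁ b₃ b₂ b₁) and
β = (c₁ c₂ b₃ b₂ b₁) on six distinct symbols contains no 3-cycle. -/
theorem t0_pair_132_no_three_cycle {X : Type*} [Fintype X] [DecidableEq X]
    (a b1 b2 b3 c1 c2 : X)
    (hdist : ([a, b1, b2, b3, c1, c2] : List X).Nodup) :
    let α := List.formPerm [a, b3, b2, b1]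
    let β := List.formPerm [c1, c2, b3, b2, b1]
    ∀ σ ∈ Subgroup.closure {α, β}, ¬ Equiv.Perm.IsThreeCycle σ := by
  intro α β σ hσ h3
  -- the embedding of `Fin 6` into `X` via the list of six distinct symbols
  set l : List X := [a, b1, b2, b3, c1, c2] with hl
  have hinj : Function.Injective l.get := List.nodup_iff_injective_get.mp hdist
  let ι : Fin 6 ↪ X := ⟨fun i => l.get (Fin.cast rfl i), fun i j hij => by
    have := hinj hij
    exact Fin.cast_injective rfl this⟩
  let φ : Perm (Fin 6) →* Perm X := Equiv.Perm.extendDomainHom ι.toEquivRange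
  have hφ : ∀ e : Perm (Fin 6), φ e = e.viaFintypeEmbedding ι := fun _ => rfl
  -- the generators are images of the concrete generators
  have hα : φ t0aux_a = α := by
    rw [hφ, t0aux_a, ← t0aux_formPerm_map ι [0,3,2,1]]
    rfl
  have hβ : φ t0aux_b = β := by
    rw [hφ, t0aux_b, ← t0aux_formPerm_map ι [4,5,3,2,1]]
    rfl
  -- σ is the image of an element of the concrete closure
  have himg : ({α, β} : Set (Perm X)) = φ '' {t0aux_a, t0aux_b} := by
    rw [Set.image_insert_eq, Set.image_singleton, hα, hβ]
  rw [himg, ← MonoidHom.map_closure] at hσ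
  obtain ⟨σ₀, hσ₀, rfl⟩ := hσ
  -- σ₀ stabilizes the total T
  have hstab : σ₀ ∈ MulAction.stabilizer (Perm (Fin 6)) t0aux_T := by
    refine Subgroup.closure_le _ |>.mpr ?_ hσ₀
    intro g hg
    rcases hg with rfl | rfl
    · exact t0aux_ha
    · exact t0aux_hb
  -- σ₀ is itself a 3-cycle since cycleType is preserved
  have h3' : σ₀.IsThreeCycle := by
    have hct : (φ σ₀).cycleType = σ₀.cycleType := by
      rw [hφ, Equiv.Perm.viaFintypeEmbedding]
      exact Equiv.Perm.cycleType_extendDomain ι.toEquivRange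
    rwa [Equiv.Perm.IsThreeCycle, hct] at h3
  obtain ⟨x, y, z, hnodup, rfl⟩ := t0aux_threeCycle_formPerm h3'
  exact t0aux_no3 x y z hnodup hstab
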